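/- The KL divergence of the multi-triangle density g_{L,ω,h} from the uniform density on [0,1] satisfies KL(P_{g_{L,ω,h}} ‖ Uniform) ≤ (L²/3) ‖ω‖₁ h³ (2 - 3 ‖ω‖₁ h), provided g_{L,ω,h} is a valid density (h ≤ 1/(2(m+1)) and ‖ω‖₁ L h² ≤ 1). -/

import Mathlib

open MeasureTheory Set intervalIntegral

noncomputable def triK (L h t : ℝ) : ℝ := max (L * (h - |t|)) 0

def wOne {m : ℕ} (ω : Fin m → Bool) : ℕ := (Finset.univ.filter fun i => ω i = true).card

noncomputable def gMulti (L h : ℝ) (m : ℕ) (ω : Fin m → Bool) (t : ℝ) : ℝ :=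
  1 - (wOne ω : ℝ) * L * h ^ 2 +
    ∑ i : Fin m, (if ω i then (1 : ℝ) else 0) * triK L h (t - ((i : ℕ) + 1) / ((m : ℕ) + 1))

lemma triK_nonneg (L h t : ℝ) : 0 ≤ triK L h t := le_max_right _ _

lemma triK_continuous (L h : ℝ) : Continuous (triK L h) := by
  have : Continuous fun t : ℝ => L * (h - |t|) := by continuity
  exact this.max continuous_const

lemma triK_eq_zero {L h t : ℝ} (hL : 0 ≤ L) (ht : h ≤ |t|) : triK L h t = 0 := by
  have hle : L * (h - |t|) ≤ 0 := mul_nonpos_of_nonneg_of_nonpos hL (by linarith)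
  simpa [triK] using max_eq_right hle

lemma abs_lt_of_triK_ne_zero {L h t : ℝ} (hL : 0 ≤ L) (ht : triK L h t ≠ 0) : |t| < h := by
  by_contra hc
  exact ht (triK_eq_zero hL (not_lt.1 hc))

lemma bump_integral_eq {c h : ℝ} (hh : 0 < h) (hc1 : h ≤ c) (hc2 : c ≤ 1 - h)
    (f : ℝ → ℝ) (hf : Continuous f) (hf0 : ∀ t, h ≤ |t| → f t = 0) :
    ∫ t in Icc (0:ℝ) 1, f (t - c) = ∫ u in (-h)..h, f u := by
  have hi : ∀ a b : ℝ, IntervalIntegrable (fun t => f (t - c)) volume a b := fun a b =>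
    (hf.comp (by continuity)).intervalIntegrable _ _
  rw [MeasureTheory.integral_Icc_eq_integral_Ioc,
    ← intervalIntegral.integral_of_le (by norm_num : (0:ℝ) ≤ 1),
    ← intervalIntegral.integral_add_adjacent_intervals (b := c - h) (hi _ _) (hi _ _),
    ← intervalIntegral.integral_add_adjacent_intervals (a := c - h) (b := c + h) (hi _ _) (hi _ _)]
  have hz1 : (∫ t in (0:ℝ)..(c - h), f (t - c)) = 0 := by
    rw [intervalIntegral.integral_congr (g := fun _ => (0:ℝ)) ?_]
    · simp
    · intro t ht
      rw [uIcc_of_le (by linarith)] at ht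
      exact hf0 _ (by rw [abs_of_nonpos (by linarith [ht.2])]; linarith [ht.2])
  have hz2 : (∫ t in (c + h)..1, f (t - c)) = 0 := by
    rw [intervalIntegral.integral_congr (g := fun _ => (0:ℝ)) ?_]
    · simp
    · intro t ht
      rw [uIcc_of_le (by linarith)] at ht
      exact hf0 _ (by rw [abs_of_nonneg (by linarith [ht.1])]; linarith [ht.1])
  have hmid : (∫ t in (c - h)..(c + h), f (t - c)) = ∫ u in (-h)..h, f u := by
    have := intervalIntegral.integral_comp_sub_right (a := c - h) (b := c + h) f c
    simpa using this
  rw [hz1, hz2, hmid]; ring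

lemma integral_triK_bump {L h : ℝ} (hL : 0 ≤ L) (hh : 0 < h) :
    (∫ u in (-h)..h, triK L h u) = L * h ^ 2 := by
  have hi : ∀ a b : ℝ, IntervalIntegrable (triK L h) volume a b := fun a b =>
    (triK_continuous L h).intervalIntegrable _ _
  rw [← integral_add_adjacent_intervals (b := 0) (hi _ _) (hi _ _)]
  have h1 : (∫ u in (-h)..(0:ℝ), triK L h u) = ∫ u in (-h)..(0:ℝ), L * (h + u) := by
    apply integral_congr
    intro u hu
    rw [uIcc_of_le (by linarith)] at hu
    unfold triK
    rw [abs_of_nonpos hu.2, sub_neg_eq_add]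
    exact max_eq_left (mul_nonneg hL (by linarith [hu.1]))
  have h2 : (∫ u in (0:ℝ)..h, triK L h u) = ∫ u in (0:ℝ)..h, L * (h - u) := by
    apply integral_congr
    intro u hu
    rw [uIcc_of_le (by linarith)] at hu
    unfold triK
    rw [abs_of_nonneg hu.1]
    exact max_eq_left (mul_nonneg hL (by linarith [hu.2]))
  rw [h1, h2, intervalIntegral.integral_const_mul, intervalIntegral.integral_const_mul,
    integral_add intervalIntegrable_const intervalIntegrable_id,
    integral_sub intervalIntegrable_const intervalIntegrable_id,
    integral_id, integral_id, intervalIntegral.integral_const, intervalIntegral.integral_const]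
  simp
  ring

lemma integral_triK_sq_bump {L h : ℝ} (hL : 0 ≤ L) (hh : 0 < h) :
    (∫ u in (-h)..h, (triK L h u) ^ 2) = 2 / 3 * L ^ 2 * h ^ 3 := by
  have hi : ∀ a b : ℝ, IntervalIntegrable (fun u => (triK L h u) ^ 2) volume a b := fun a b =>
    ((triK_continuous L h).pow 2).intervalIntegrable _ _
  rw [← integral_add_adjacent_intervals (b := 0) (hi _ _) (hi _ _)]
  have h1 : (∫ u in (-h)..(0:ℝ), (triK L h u) ^ 2)
      = ∫ u in (-h)..(0:ℝ), L ^ 2 * (h + u) ^ 2 := by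
    apply integral_congr
    intro u hu
    rw [uIcc_of_le (by linarith)] at hu
    show (max (L * (h - |u|)) 0) ^ 2 = L ^ 2 * (h + u) ^ 2
    rw [abs_of_nonpos hu.2, sub_neg_eq_add,
      max_eq_left (mul_nonneg hL (by linarith [hu.1]))]
    ring
  have h2 : (∫ u in (0:ℝ)..h, (triK L h u) ^ 2)
      = ∫ u in (0:ℝ)..h, L ^ 2 * (h - u) ^ 2 := by
    apply integral_congr
    intro u hu
    rw [uIcc_of_le (by linarith)] at hu
    show (max (L * (h - |u|)) 0) ^ 2 = L ^ 2 * (h - u) ^ 2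
    rw [abs_of_nonneg hu.1, max_eq_left (mul_nonneg hL (by linarith [hu.2]))]
    ring
  have e1 : (∫ u in (-h)..(0:ℝ), (h + u) ^ 2) = h ^ 3 / 3 := by
    have e : (∫ u in (-h)..(0:ℝ), (h + u) ^ 2) = ∫ u in (-h)..(0:ℝ), (u + h) ^ 2 := by
      apply integral_congr; intro u _; ring
    have := integral_comp_add_right (a := -h) (b := 0) (fun x => x ^ 2) h
    rw [e, this, integral_pow]
    ring_nf
  have e2 : (∫ u in (0:ℝ)..h, (h - u) ^ 2) = h ^ 3 / 3 := by
    have e : (∫ u in (0:ℝ)..h, (h - u) ^ 2) = ∫ u in (0:ℝ)..h, (u - h) ^ 2 := by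
      apply integral_congr; intro u _; ring
    have := integral_comp_sub_right (a := 0) (b := h) (fun x => x ^ 2) h
    rw [e, this, integral_pow]
    ring_nf
  rw [h1, h2, intervalIntegral.integral_const_mul, intervalIntegral.integral_const_mul, e1, e2]
  ring

lemma div_le_div_of_nonneg_right' {a b c : ℝ} (hab : a ≤ b) (hc : 0 < c) :
    a / c ≤ b / c := (div_le_div_iff_of_pos_right hc).2 hab

lemma mul_log_le_sq_sub {x : ℝ} (hx : 0 ≤ x) : x * Real.log x ≤ x ^ 2 - x := by
  rcases eq_or_lt_of_le hx with h0 | h0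
  · simp [← h0]
  · nlinarith [Real.log_le_sub_one_of_pos h0]

/-- KL divergence of the multi-triangle distribution from the uniform distribution
on `[0,1]`: `KL(P_{g_ω} ‖ Unif) = ∫₀¹ g_ω ln g_ω ≤ (L²/3) ‖ω‖₁ h³ (2 - 3 ‖ω‖₁ h)`. -/
theorem kl_gMulti_uniform_le (m : ℕ) (hm : 1 ≤ m) (ω : Fin m → Bool)
    (L h : ℝ) (hL : 0 < L) (hh : 0 < h) (hh2 : h ≤ 1 / (2 * ((m : ℝ) + 1)))
    (hval : (wOne ω : ℝ) * L * h ^ 2 ≤ 1) :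
    (∫ t in Set.Icc (0 : ℝ) 1, gMulti L h m ω t * Real.log (gMulti L h m ω t))
      ≤ (L ^ 2 / 3) * (wOne ω : ℝ) * h ^ 3 * (2 - 3 * (wOne ω : ℝ) * h) := by
  classical
  set W : ℝ := (wOne ω : ℝ) with hWdef
  set c : Fin m → ℝ := fun i => (((i : ℕ) : ℝ) + 1) / ((m : ℝ) + 1) with hcdef
  set b : Fin m → ℝ := fun i => if ω i then (1 : ℝ) else 0 with hbdef
  have hmpos : (0:ℝ) < (m : ℝ) + 1 := by positivity
  have h2h : 2 * h ≤ 1 / ((m : ℝ) + 1) := by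
    rw [le_div_iff₀ hmpos]
    rw [le_div_iff₀ (by positivity)] at hh2
    linarith
  have hc1 : ∀ i : Fin m, h ≤ c i := by
    intro i
    have h1 : (1:ℝ) / ((m:ℝ)+1) ≤ c i := by
      show (1:ℝ) / ((m:ℝ)+1) ≤ (((i : ℕ) : ℝ) + 1) / ((m : ℝ) + 1)
      exact div_le_div_of_nonneg_right' (by have : (0:ℝ) ≤ ((i : ℕ) : ℝ) := Nat.cast_nonneg _; linarith) hmpos
    linarith
  have hc2 : ∀ i : Fin m, c i ≤ 1 - h := by
    intro i
    have h1 : ((i : ℕ) : ℝ) + 1 ≤ (m : ℝ) := by exact_mod_cast Nat.succ_le_of_lt i.isLt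
    have h2 : c i ≤ (m : ℝ) / ((m:ℝ)+1) := by
      show (((i : ℕ) : ℝ) + 1) / ((m : ℝ) + 1) ≤ (m : ℝ) / ((m:ℝ)+1)
      exact div_le_div_of_nonneg_right' h1 hmpos
    have h3 : (m:ℝ)/((m:ℝ)+1) = 1 - 1/((m:ℝ)+1) := by field_simp; ring
    linarith
  -- continuity
  have hKcont : ∀ i : Fin m, Continuous fun t => triK L h (t - c i) := fun i =>
    (triK_continuous L h).comp (continuous_sub_right _)
  have hScont : Continuous fun t => ∑ i : Fin m, b i * triK L h (t - c i) :=
    continuous_finset_sum _ fun i _ => continuous_const.mul (hKcont i)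
  have hTcont : Continuous fun t => ∑ i : Fin m, b i * (triK L h (t - c i)) ^ 2 :=
    continuous_finset_sum _ fun i _ => continuous_const.mul ((hKcont i).pow 2)
  have hg : ∀ t, gMulti L h m ω t = (1 - W * L * h ^ 2) + ∑ i : Fin m, b i * triK L h (t - c i) :=
    fun t => rfl
  have hgcont : Continuous (gMulti L h m ω) := by
    have : gMulti L h m ω = fun t => (1 - W * L * h ^ 2) + ∑ i : Fin m, b i * triK L h (t - c i) :=
      funext hg
    rw [this]
    exact continuous_const.add hScont
  have hbnn : ∀ i, 0 ≤ b i := by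
    intro i; rw [hbdef]; dsimp only; split <;> norm_num
  have hb01 : ∀ i, b i * b i = b i := by
    intro i; rw [hbdef]; dsimp only; split <;> norm_num
  have hgnn : ∀ t, 0 ≤ gMulti L h m ω t := by
    intro t
    rw [hg t]
    have h1 : 0 ≤ ∑ i : Fin m, b i * triK L h (t - c i) :=
      Finset.sum_nonneg fun i _ => mul_nonneg (hbnn i) (triK_nonneg _ _ _)
    have h2 : W * L * h ^ 2 ≤ 1 := hval
    linarith
  -- pointwise bound
  have hpt : ∀ t ∈ Icc (0:ℝ) 1,
      gMulti L h m ω t * Real.log (gMulti L h m ω t)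
        ≤ (gMulti L h m ω t) ^ 2 - gMulti L h m ω t := fun t _ =>
    mul_log_le_sq_sub (hgnn t)
  have hint1 : IntegrableOn (fun t => gMulti L h m ω t * Real.log (gMulti L h m ω t))
      (Icc (0:ℝ) 1) volume :=
    (Real.continuous_mul_log.comp hgcont).integrableOn_Icc
  have hint2 : IntegrableOn (fun t => (gMulti L h m ω t) ^ 2 - gMulti L h m ω t)
      (Icc (0:ℝ) 1) volume :=
    ((hgcont.pow 2).sub hgcont).integrableOn_Icc
  have step1 : (∫ t in Icc (0:ℝ) 1, gMulti L h m ω t * Real.log (gMulti L h m ω t))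
      ≤ ∫ t in Icc (0:ℝ) 1, ((gMulti L h m ω t) ^ 2 - gMulti L h m ω t) :=
    setIntegral_mono_on hint1 hint2 measurableSet_Icc hpt
  -- separation of bumps
  have hsep : ∀ (i j : Fin m), i ≠ j → ∀ t, triK L h (t - c i) * triK L h (t - c j) = 0 := by
    intro i j hij t
    by_contra hne
    have h1 := abs_lt_of_triK_ne_zero hL.le (left_ne_zero_of_mul hne)
    have h2 := abs_lt_of_triK_ne_zero hL.le (right_ne_zero_of_mul hne)
    have hzne : ((i : ℕ) : ℤ) ≠ ((j : ℕ) : ℤ) := by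
      simpa using fun hc => hij (Fin.ext (by exact_mod_cast hc))
    have hone : (1:ℝ) ≤ |((i : ℕ) : ℝ) - ((j : ℕ) : ℝ)| := by
      have := Int.one_le_abs (sub_ne_zero.2 hzne)
      exact_mod_cast this
    have hdiff : c i - c j = (((i : ℕ) : ℝ) - ((j : ℕ) : ℝ)) / ((m : ℝ) + 1) := by
      rw [hcdef]; ring
    have habs : 1 / ((m : ℝ) + 1) ≤ |c i - c j| := by
      rw [hdiff, abs_div, abs_of_pos hmpos]
      gcongr
    have htri : |c i - c j| ≤ |t - c i| + |t - c j| := by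
      have := abs_sub_le (c i) t (c j)
      rw [abs_sub_comm (c i) t] at this
      linarith
    linarith
  -- pointwise square identity
  have hsq : ∀ t, (∑ i : Fin m, b i * triK L h (t - c i)) ^ 2
      = ∑ i : Fin m, b i * (triK L h (t - c i)) ^ 2 := by
    intro t
    rw [sq, Finset.sum_mul_sum]
    refine Finset.sum_congr rfl fun i _ => ?_
    rw [Finset.sum_eq_single i]
    · rw [mul_mul_mul_comm, hb01 i, ← sq]
    · intro j _ hji
      rw [mul_mul_mul_comm, hsep i j (Ne.symm hji), mul_zero]
    · intro hni; exact absurd (Finset.mem_univ i) hni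
  -- bump integrals
  have hKint : ∀ i : Fin m, (∫ t in Icc (0:ℝ) 1, triK L h (t - c i)) = L * h ^ 2 := by
    intro i
    rw [bump_integral_eq hh (hc1 i) (hc2 i) (triK L h) (triK_continuous L h)
      (fun t ht => triK_eq_zero hL.le ht)]
    exact integral_triK_bump hL.le hh
  have hK2int : ∀ i : Fin m,
      (∫ t in Icc (0:ℝ) 1, (triK L h (t - c i)) ^ 2) = 2 / 3 * L ^ 2 * h ^ 3 := by
    intro i
    rw [bump_integral_eq hh (hc1 i) (hc2 i) (fun u => (triK L h u) ^ 2)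
      ((triK_continuous L h).pow 2) (fun t ht => by show triK L h t ^ 2 = 0; rw [triK_eq_zero hL.le ht]; norm_num)]
    exact integral_triK_sq_bump hL.le hh
  have hsumb : ∑ i : Fin m, b i = W := by
    rw [hbdef, hWdef]
    simp [wOne, Finset.sum_boole]
  -- compute the integral of g² - g
  have hrw : ∀ t, (gMulti L h m ω t) ^ 2 - gMulti L h m ω t
      = (((1 - W * L * h ^ 2) ^ 2 - (1 - W * L * h ^ 2))
          + (2 * (1 - W * L * h ^ 2) - 1) * (∑ i : Fin m, b i * triK L h (t - c i)))
        + ∑ i : Fin m, b i * (triK L h (t - c i)) ^ 2 := by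
    intro t
    rw [hg t, ← hsq t]
    ring
  have hSval : (∫ t in Icc (0:ℝ) 1, ∑ i : Fin m, b i * triK L h (t - c i)) = W * (L * h ^ 2) := by
    rw [MeasureTheory.integral_finset_sum (f := fun i t => b i * triK L h (t - c i)) _
      (fun i _ => (continuous_const.mul (hKcont i)).integrableOn_Icc)]
    calc ∑ i : Fin m, ∫ t in Icc (0:ℝ) 1, b i * triK L h (t - c i)
        = ∑ i : Fin m, b i * (L * h ^ 2) := by
          refine Finset.sum_congr rfl fun i _ => ?_
          rw [MeasureTheory.integral_const_mul, hKint i]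
      _ = W * (L * h ^ 2) := by rw [← Finset.sum_mul, hsumb]
  have hTval : (∫ t in Icc (0:ℝ) 1, ∑ i : Fin m, b i * (triK L h (t - c i)) ^ 2)
      = W * (2 / 3 * L ^ 2 * h ^ 3) := by
    rw [MeasureTheory.integral_finset_sum (f := fun i t => b i * (triK L h (t - c i)) ^ 2) _
      (fun i _ => (show Continuous fun t => b i * (triK L h (t - c i)) ^ 2 from
        continuous_const.mul ((hKcont i).pow 2)).integrableOn_Icc)]
    calc ∑ i : Fin m, ∫ t in Icc (0:ℝ) 1, b i * (triK L h (t - c i)) ^ 2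
        = ∑ i : Fin m, b i * (2 / 3 * L ^ 2 * h ^ 3) := by
          refine Finset.sum_congr rfl fun i _ => ?_
          rw [MeasureTheory.integral_const_mul, hK2int i]
      _ = W * (2 / 3 * L ^ 2 * h ^ 3) := by rw [← Finset.sum_mul, hsumb]
  have step2 : (∫ t in Icc (0:ℝ) 1, ((gMulti L h m ω t) ^ 2 - gMulti L h m ω t))
      = ((1 - W * L * h ^ 2) ^ 2 - (1 - W * L * h ^ 2))
        + (2 * (1 - W * L * h ^ 2) - 1) * (W * (L * h ^ 2))
        + W * (2 / 3 * L ^ 2 * h ^ 3) := by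
    simp only [hrw]
    rw [MeasureTheory.integral_add
      (f := fun t => ((1 - W * L * h ^ 2) ^ 2 - (1 - W * L * h ^ 2))
            + (2 * (1 - W * L * h ^ 2) - 1) * (∑ i : Fin m, b i * triK L h (t - c i)))
      (g := fun t => ∑ i : Fin m, b i * (triK L h (t - c i)) ^ 2)
      ((show Continuous fun t => ((1 - W * L * h ^ 2) ^ 2 - (1 - W * L * h ^ 2))
            + (2 * (1 - W * L * h ^ 2) - 1) * (∑ i : Fin m, b i * triK L h (t - c i)) from
        continuous_const.add (continuous_const.mul hScont)).integrableOn_Icc)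
      (hTcont.integrableOn_Icc),
      MeasureTheory.integral_add
      (f := fun _ => ((1 - W * L * h ^ 2) ^ 2 - (1 - W * L * h ^ 2)))
      (g := fun t => (2 * (1 - W * L * h ^ 2) - 1) * (∑ i : Fin m, b i * triK L h (t - c i)))
      ((continuous_const (y := ((1 - W * L * h ^ 2) ^ 2 - (1 - W * L * h ^ 2)))).integrableOn_Icc)
      ((show Continuous fun t => (2 * (1 - W * L * h ^ 2) - 1) * (∑ i : Fin m, b i * triK L h (t - c i)) from
        continuous_const.mul hScont).integrableOn_Icc),
      MeasureTheory.integral_const_mul, hSval, hTval, MeasureTheory.setIntegral_const,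
      Real.volume_real_Icc]
    norm_num
  have final : ((1 - W * L * h ^ 2) ^ 2 - (1 - W * L * h ^ 2))
        + (2 * (1 - W * L * h ^ 2) - 1) * (W * (L * h ^ 2))
        + W * (2 / 3 * L ^ 2 * h ^ 3)
      = (L ^ 2 / 3) * W * h ^ 3 * (2 - 3 * W * h) := by ring
  calc (∫ t in Icc (0:ℝ) 1, gMulti L h m ω t * Real.log (gMulti L h m ω t))
      ≤ ∫ t in Icc (0:ℝ) 1, ((gMulti L h m ω t) ^ 2 - gMulti L h m ω t) := step1
    _ = (L ^ 2 / 3) * W * h ^ 3 * (2 - 3 * W * h) := by rw [step2, final]
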